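/- Subgradient method with the Polyak step-size: if f is convex with minimizer x*, iterates x^{k+1} = x^k − γ_k g^k where g^k is a subgradient of f at x^k with ‖g^k‖ ≤ G and γ_k = (f(x^k) − f(x*))/‖g^k‖², then min_{0≤i≤k} f(x^i) − f(x*) ≤ G‖x^0 − x*‖/√(k+1). -/

import Mathlib

open scoped RealInnerProductSpace

/-- Subgradient method with the Polyak step-size: if `f` is convex with minimizer `x*`,
`x^{k+1} = x^k − γ_k g^k` with `g^k` a subgradient of `f` at `x^k`, `‖g^k‖ ≤ G`, and
`γ_k = (f(x^k) − f(x*))/‖g^k‖²`, then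
`min_{0 ≤ i ≤ k} f(x^i) − f(x*) ≤ G ‖x^0 − x*‖ / √(k+1)`. -/
theorem stmt3 {d : ℕ} (f : EuclideanSpace ℝ (Fin d) → ℝ)
    (hf : ConvexOn ℝ Set.univ f)
    (xstar : EuclideanSpace ℝ (Fin d)) (hxstar : ∀ y, f xstar ≤ f y)
    (x g : ℕ → EuclideanSpace ℝ (Fin d))
    (hsub : ∀ k y, f y ≥ f (x k) + ⟪g k, y - x k⟫)
    (hgne : ∀ k, f (x k) ≠ f xstar → g k ≠ 0)
    (G : ℝ) (hG : 0 < G) (hGbound : ∀ k, ‖g k‖ ≤ G)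
    (hstep : ∀ k, x (k + 1) = x k - ((f (x k) - f xstar) / ‖g k‖ ^ 2) • g k) :
    ∀ k, Finset.inf' (Finset.range (k + 1)) ⟨0, Finset.mem_range.mpr (Nat.succ_pos k)⟩
        (fun i => f (x i)) - f xstar ≤ G * ‖x 0 - xstar‖ / Real.sqrt (k + 1) := by
  intro k
  set δ : ℕ → ℝ := fun i => f (x i) - f xstar with hδdef
  clear_value δ
  have hδnn : ∀ i, 0 ≤ δ i := fun i => by rw [hδdef]; exact sub_nonneg.2 (hxstar _)
  have key : ∀ i, δ i ^ 2 / G ^ 2 ≤ ‖x i - xstar‖ ^ 2 - ‖x (i+1) - xstar‖ ^ 2 := by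
    intro i
    by_cases hg : g i = 0
    · have hδ0 : δ i = 0 := by
        by_contra h
        exact hgne i (fun he => h (by simp [hδdef, he])) hg
      have hδ0' : f (x i) - f xstar = 0 := by rw [hδdef] at hδ0; exact hδ0
      rw [hstep i, hg]
      simp [hδ0, hδ0']
    · have hgn : (0:ℝ) < ‖g i‖ := norm_pos_iff.2 hg
      have hgn2 : (0:ℝ) < ‖g i‖ ^ 2 := by positivity
      have hip : δ i ≤ ⟪g i, x i - xstar⟫ := by
        have h1 := hsub i xstar
        have h2 : ⟪g i, xstar - x i⟫ = -⟪g i, x i - xstar⟫ := by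
          rw [← inner_neg_right]; congr 1; abel
        simp only [h2] at h1
        simp only [hδdef]
        linarith
      set γ : ℝ := δ i / ‖g i‖ ^ 2 with hγ
      clear_value γ
      have hexp : x (i+1) - xstar = (x i - xstar) - γ • g i := by
        rw [hstep i, hγ]; simp only [hδdef]; abel
      have hns : ‖γ • g i‖ ^ 2 = γ ^ 2 * ‖g i‖ ^ 2 := by
        rw [norm_smul, mul_pow, Real.norm_eq_abs, sq_abs]
      have hnorm : ‖x (i+1) - xstar‖ ^ 2
          = ‖x i - xstar‖ ^ 2 - 2 * γ * ⟪g i, x i - xstar⟫ + γ ^ 2 * ‖g i‖ ^ 2 := by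
        rw [hexp, norm_sub_sq_real, real_inner_smul_right, hns,
          real_inner_comm (x i - xstar) (g i)]
        ring
      have hγnn : 0 ≤ γ := hγ ▸ div_nonneg (hδnn i) (le_of_lt hgn2)
      have hmono : 2 * γ * δ i ≤ 2 * γ * ⟪g i, x i - xstar⟫ := by nlinarith
      have hγδ : γ * δ i = δ i ^ 2 / ‖g i‖ ^ 2 := by rw [hγ]; ring
      have hsq2 : γ ^ 2 * ‖g i‖ ^ 2 = δ i ^ 2 / ‖g i‖ ^ 2 := by
        rw [hγ]; field_simp
      have step1 : ‖x (i+1) - xstar‖ ^ 2 ≤ ‖x i - xstar‖ ^ 2 - δ i ^ 2 / ‖g i‖ ^ 2 := by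
        rw [hnorm, hsq2]
        linarith
      have hGle : δ i ^ 2 / G ^ 2 ≤ δ i ^ 2 / ‖g i‖ ^ 2 := by
        exact div_le_div_of_nonneg_left (sq_nonneg _) hgn2 (pow_le_pow_left₀ hgn.le (hGbound i) 2)
      linarith
  have hsum : ∑ i ∈ Finset.range (k+1), δ i ^ 2 / G ^ 2 ≤ ‖x 0 - xstar‖ ^ 2 := by
    calc ∑ i ∈ Finset.range (k+1), δ i ^ 2 / G ^ 2
        ≤ ∑ i ∈ Finset.range (k+1), (‖x i - xstar‖ ^ 2 - ‖x (i+1) - xstar‖ ^ 2) :=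
          Finset.sum_le_sum fun i _ => key i
      _ = ‖x 0 - xstar‖ ^ 2 - ‖x (k+1) - xstar‖ ^ 2 :=
          Finset.sum_range_sub' (fun i => ‖x i - xstar‖ ^ 2) (k+1)
      _ ≤ ‖x 0 - xstar‖ ^ 2 := by nlinarith [sq_nonneg ‖x (k+1) - xstar‖]
  set m : ℝ := Finset.inf' (Finset.range (k + 1))
      ⟨0, Finset.mem_range.mpr (Nat.succ_pos k)⟩ (fun i => f (x i)) with hm
  have hne : (Finset.range (k+1)).Nonempty := ⟨0, Finset.mem_range.mpr (Nat.succ_pos k)⟩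
  have hmnn : 0 ≤ m - f xstar := by
    obtain ⟨i, hi, hie⟩ := Finset.exists_mem_eq_inf' hne (fun i => f (x i))
    have : m = f (x i) := hie
    rw [this]
    exact sub_nonneg.2 (hxstar _)
  have hmle : ∀ i ∈ Finset.range (k+1), m - f xstar ≤ δ i := by
    intro i hi
    have h3 : m ≤ f (x i) := Finset.inf'_le _ hi
    simp only [hδdef]
    linarith
  have hG2 : (0:ℝ) < G ^ 2 := by positivity
  have hsumlb : (k+1 : ℝ) * ((m - f xstar) ^ 2 / G ^ 2)
      ≤ ∑ i ∈ Finset.range (k+1), δ i ^ 2 / G ^ 2 := by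
    have hterm : ∀ i ∈ Finset.range (k+1),
        (m - f xstar) ^ 2 / G ^ 2 ≤ δ i ^ 2 / G ^ 2 := by
      intro i hi
      exact (div_le_div_iff_of_pos_right hG2).2 (pow_le_pow_left₀ hmnn (hmle i hi) 2)
    calc (k+1 : ℝ) * ((m - f xstar) ^ 2 / G ^ 2)
        = ∑ _i ∈ Finset.range (k+1), (m - f xstar) ^ 2 / G ^ 2 := by
          simp [Finset.sum_const, mul_comm]
      _ ≤ _ := Finset.sum_le_sum hterm
  have hk1 : (0:ℝ) < (k:ℝ) + 1 := by positivity
  have h1 : (k+1 : ℝ) * ((m - f xstar) ^ 2 / G ^ 2) ≤ ‖x 0 - xstar‖ ^ 2 :=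
    le_trans hsumlb hsum
  have h1' : ((k:ℝ)+1) * (m - f xstar) ^ 2 ≤ G ^ 2 * ‖x 0 - xstar‖ ^ 2 := by
    calc ((k:ℝ)+1) * (m - f xstar) ^ 2
        = ((k+1 : ℝ) * ((m - f xstar) ^ 2 / G ^ 2)) * G ^ 2 := by field_simp
      _ ≤ ‖x 0 - xstar‖ ^ 2 * G ^ 2 := by nlinarith
      _ = G ^ 2 * ‖x 0 - xstar‖ ^ 2 := by ring
  have hsqrt : (Real.sqrt ((k:ℝ)+1)) ^ 2 = (k:ℝ) + 1 := Real.sq_sqrt (le_of_lt hk1)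
  have hfinal : (m - f xstar) ^ 2 ≤ (G * ‖x 0 - xstar‖ / Real.sqrt ((k:ℝ)+1)) ^ 2 := by
    rw [div_pow, mul_pow, hsqrt, le_div_iff₀ hk1]
    nlinarith
  have hrhsnn : 0 ≤ G * ‖x 0 - xstar‖ / Real.sqrt ((k:ℝ)+1) := by positivity
  nlinarith [hfinal, hmnn, hrhsnn]
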